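/- arXiv:1801.09526 — 2 statements merged into one kernel-verified Lean document; each statement's English description precedes it below -/
import Mathlib

section
/- Let n = 2b, let Φ be an n×n real matrix, and let X̂ = X̂₁ × ⋯ × X̂_b be a decomposed set with each X̂_j ⊆ ℝ² nonempty, compact, and convex. Then the image of X̂ under Φ is contained in the decomposed image: Φ X̂ ⊆ X̂', where X̂'_i = Φ_{i1}X̂₁ ⊕ ⋯ ⊕ Φ_{ib}X̂_b and X̂' = X̂'₁ × ⋯ × X̂'_b. -/
open Set Pointwise Matrix

noncomputable section

/-- The `p`-norm on `ι → ℝ`. -/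
def pnorm {ι : Type} [Fintype ι] (p : ℝ) (x : ι → ℝ) : ℝ :=
  (∑ i, |x i| ^ p) ^ (1 / p)

/-- Dot product. -/
def dotp {ι : Type} [Fintype ι] (x y : ι → ℝ) : ℝ := ∑ i, x i * y i

/-- Support function of a set. -/
def suppF {ι : Type} [Fintype ι] (X : Set (ι → ℝ)) (ℓ : ι → ℝ) : ℝ :=
  sSup (dotp ℓ '' X)

/-- Closed unit ball of the `p`-norm. -/
def pball (ι : Type) [Fintype ι] (p : ℝ) : Set (ι → ℝ) := {x | pnorm p x ≤ 1}

/-- Hausdorff distance with respect to the `p`-norm. -/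
def hausP {ι : Type} [Fintype ι] (p : ℝ) (X Y : Set (ι → ℝ)) : ℝ :=
  sInf {ε | 0 ≤ ε ∧ X ⊆ Y + ε • pball ι p ∧ Y ⊆ X + ε • pball ι p}

/-- Image of a set under a matrix. -/
def mapSet {ι κ : Type} [Fintype ι] [Fintype κ] (M : Matrix ι κ ℝ) (S : Set (κ → ℝ)) :
    Set (ι → ℝ) := M.mulVec '' S

/-- Induced matrix `p`-norm. -/
def matP {ι κ : Type} [Fintype ι] [Fintype κ] (p : ℝ) (M : Matrix ι κ ℝ) : ℝ :=
  sSup {r | ∃ x : κ → ℝ, pnorm p x ≤ 1 ∧ r = pnorm p (M.mulVec x)}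

/-- Diameter of a planar set with respect to the dual exponent `q`:
the smallest `Δ ≥ 0` with `ρ_Y(d) + ρ_Y(-d) ≤ ‖d‖_q * Δ` for all `d`. -/
def diamP (q : ℝ) (Y : Set (Fin 2 → ℝ)) : ℝ :=
  sInf {Δ | 0 ≤ Δ ∧ ∀ d : Fin 2 → ℝ, suppF Y d + suppF Y (-d) ≤ pnorm q d * Δ}

/-- The 2×2 block of `Φ` in block-row `i` and block-column `j`. -/
def blk {b : ℕ} (Φ : Matrix (Fin b × Fin 2) (Fin b × Fin 2) ℝ) (i j : Fin b) :
    Matrix (Fin 2) (Fin 2) ℝ := fun r c => Φ (i, r) (j, c)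

/-- The 2×n row-block of `Φ` formed by the rows of block `i`. -/
def rowBlk {b : ℕ} (Φ : Matrix (Fin b × Fin 2) (Fin b × Fin 2) ℝ) (i : Fin b) :
    Matrix (Fin 2) (Fin b × Fin 2) ℝ := fun r c => Φ (i, r) c

/-- Projection `π_i` onto the `i`-th block of coordinates. -/
def projB {b : ℕ} (i : Fin b) (x : Fin b × Fin 2 → ℝ) : Fin 2 → ℝ := fun r => x (i, r)

/-- Cartesian product of a family of planar sets, as a subset of `ℝⁿ` (`n = 2b`). -/
def prodSet {b : ℕ} (Xh : Fin b → Set (Fin 2 → ℝ)) : Set (Fin b × Fin 2 → ℝ) :=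
  {x | ∀ i, projB i x ∈ Xh i}

/-- Cartesian decomposition `D̂(X) = π₁X × ⋯ × π_b X`. -/
def cartD {b : ℕ} (X : Set (Fin b × Fin 2 → ℝ)) : Set (Fin b × Fin 2 → ℝ) :=
  prodSet (fun i => projB i '' X)

/-- Decomposed image: `X̂'_i = ⨁_j Φ_{ij} X̂_j`. -/
def dimg {b : ℕ} (Φ : Matrix (Fin b × Fin 2) (Fin b × Fin 2) ℝ)
    (Xh : Fin b → Set (Fin 2 → ℝ)) : Fin b → Set (Fin 2 → ℝ) :=
  fun i => ∑ j, mapSet (blk Φ i j) (Xh j)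


/-- the image of a decomposed set `X̂ = X̂₁ × ⋯ × X̂_b` (with each `X̂_j`
nonempty, compact and convex) under `Φ` is contained in the decomposed image
`X̂' = X̂'₁ × ⋯ × X̂'_b`, `X̂'_i = ⨁_j Φ_{ij} X̂_j`. -/
theorem mapSet_subset_prodSet_dimg {b : ℕ}
    (Φ : Matrix (Fin b × Fin 2) (Fin b × Fin 2) ℝ)
    (Xh : Fin b → Set (Fin 2 → ℝ))
    (hne : ∀ j, (Xh j).Nonempty) (hc : ∀ j, IsCompact (Xh j))
    (hconv : ∀ j, Convex ℝ (Xh j)) :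
    mapSet Φ (prodSet Xh) ⊆ prodSet (dimg Φ Xh) := by
  rintro y ⟨x, hx, rfl⟩ i
  have key : projB i (Φ.mulVec x) = ∑ j, (blk Φ i j).mulVec (projB j x) := by
    funext r
    simp only [projB, Matrix.mulVec, dotProduct, blk, Fintype.sum_prod_type,
      Finset.sum_apply]
  rw [key]
  exact Set.finset_sum_mem_finset_sum Finset.univ _ _
    (fun j _ => Set.mem_image_of_mem _ (hx j))

end
end

section
/- Let n = 2b, let Φ be an n×n real matrix such that in every block-column j there is at most one index i with Φ_{ij} ≠ 0, and let X̂ = X̂₁ × ⋯ × X̂_b be a decomposed set with each X̂_j ⊆ ℝ² nonempty compact convex. Then the decomposed image equals the exact image: X̂' = Φ X̂ (i.e., the decomposition error of the map is zero). -/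
open Set Pointwise Matrix

noncomputable section

lemma projB_mulVec {b : ℕ} (Φ : Matrix (Fin b × Fin 2) (Fin b × Fin 2) ℝ)
    (x : Fin b × Fin 2 → ℝ) (i : Fin b) :
    projB i (Φ.mulVec x) = ∑ j, (blk Φ i j).mulVec (projB j x) := by
  funext r
  simp only [projB, Matrix.mulVec, dotProduct, blk, Finset.sum_apply]
  exact Fintype.sum_prod_type _


/-- if every block-column of `Φ` has at most one nonzero 2×2 block,
then the decomposed image of a decomposed set (nonempty compact convex components)
equals the exact image: `X̂' = Φ X̂`. -/
theorem dimg_eq_mapSet_of_single_block {b : ℕ}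
    (Φ : Matrix (Fin b × Fin 2) (Fin b × Fin 2) ℝ)
    (hcol : ∀ j i₁ i₂, blk Φ i₁ j ≠ 0 → blk Φ i₂ j ≠ 0 → i₁ = i₂)
    (Xh : Fin b → Set (Fin 2 → ℝ))
    (hne : ∀ j, (Xh j).Nonempty) (hc : ∀ j, IsCompact (Xh j))
    (hconv : ∀ j, Convex ℝ (Xh j)) :
    prodSet (dimg Φ Xh) = mapSet Φ (prodSet Xh) := by
  apply Set.Subset.antisymm
  · intro y hy
    -- extract representatives
    have hrep : ∀ i : Fin b, ∃ z : Fin b → Fin 2 → ℝ,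
        (∀ j, z j ∈ Xh j) ∧ ∑ j, (blk Φ i j).mulVec (z j) = projB i y := by
      intro i
      have := hy i
      rw [dimg, Set.mem_fintype_sum] at this
      obtain ⟨g, hg, hsum⟩ := this
      choose z hz hz2 using fun j => hg j
      exact ⟨z, hz, by rw [Finset.sum_congr rfl fun j _ => hz2 j]; exact hsum⟩
    choose z hz hz2 using hrep
    -- pick a single representative per column
    classical
    set w : Fin b → Fin 2 → ℝ := fun j =>
      if h : ∃ i, blk Φ i j ≠ 0 then z h.choose j else (hne j).choose with hw
    have hwmem : ∀ j, w j ∈ Xh j := by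
      intro j
      rw [hw]
      by_cases h : ∃ i, blk Φ i j ≠ 0
      · simpa [h] using hz h.choose j
      · simpa [h] using (hne j).choose_spec
    refine ⟨fun p => w p.1 p.2, fun j => hwmem j, ?_⟩
    have key : ∀ i, projB i (Φ.mulVec fun p => w p.1 p.2) = projB i y := by
      intro i
      rw [projB_mulVec, ← hz2 i]
      apply Finset.sum_congr rfl
      intro j _
      have hpj : projB j (fun p : Fin b × Fin 2 => w p.1 p.2) = w j := rfl
      rw [hpj]
      by_cases h0 : blk Φ i j = 0
      · simp [h0, Matrix.mulVec]
      · have hex : ∃ i', blk Φ i' j ≠ 0 := ⟨i, h0⟩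
        have : hex.choose = i := hcol j hex.choose i hex.choose_spec h0
        rw [hw]
        simp only [dif_pos hex, this]
    funext p
    have := congrFun (key p.1) p.2
    exact this
  · rintro _ ⟨x, hx, rfl⟩
    intro i
    rw [dimg, Set.mem_fintype_sum]
    refine ⟨fun j => (blk Φ i j).mulVec (projB j x), fun j => ⟨projB j x, hx j, rfl⟩, ?_⟩
    exact (projB_mulVec Φ x i).symm

end
end
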